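/- Let G be a geometric graph in ℝ² (vertices V ⊆ ℝ², distinct u, v adjacent iff ‖u − v‖ ≤ 1) that is 2√2-dense, i.e., every Euclidean ball of radius 1/(2√2) centered at a point of the convex hull of V contains a point of V. Then for all u, v ∈ V with ‖u − v‖ > 1, the graph distance satisfies d_G(u,v) ≤ 2√2·‖u − v‖. -/

import Mathlib

open SimpleGraph

/-- The geometric graph on a set `V ⊆ ℝ^k`: distinct points `u, v` are adjacent iff
`‖u − v‖ ≤ 1`. -/
def geomGraph {k : ℕ} (V : Set (EuclideanSpace ℝ (Fin k))) : SimpleGraph V where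
  Adj u v := u ≠ v ∧ ‖(u : EuclideanSpace ℝ (Fin k)) - (v : EuclideanSpace ℝ (Fin k))‖ ≤ 1
  symm := by
    constructor
    rintro u v ⟨h1, h2⟩
    refine ⟨h1.symm, ?_⟩
    rwa [← norm_neg, neg_sub]
  loopless := by
    constructor
    rintro u ⟨h, -⟩
    exact h rfl

namespace Stmt17Aux

open Real RealInnerProductSpace

noncomputable section

variable {E : Type*} [NormedAddCommGroup E] [InnerProductSpace ℝ E]

/-- Projection coordinate along direction `e` based at `u`. -/
def tp (u e p : E) : ℝ := ⟪p - u, e⟫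

/-- Perpendicular component. -/
def wp (u e p : E) : E := (p - u) - tp u e p • e

lemma decomp (u e p q : E) :
    p - q = (tp u e p - tp u e q) • e + (wp u e p - wp u e q) := by
  simp only [wp, sub_smul]; abel

lemma inner_e_wp (u e : E) (he : ‖e‖ = 1) (p : E) : ⟪e, wp u e p⟫ = 0 := by
  simp only [wp, tp, inner_sub_right, inner_sub_left, real_inner_smul_right]
  rw [real_inner_self_eq_norm_sq, he, real_inner_comm e p, real_inner_comm e u]
  ring

lemma pyth (u e : E) (he : ‖e‖ = 1) (p q : E) :
    ‖p - q‖ ^ 2 = (tp u e p - tp u e q) ^ 2 + ‖wp u e p - wp u e q‖ ^ 2 := by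
  rw [decomp u e p q, norm_add_sq_real]
  have h1 : ⟪(tp u e p - tp u e q) • e, wp u e p - wp u e q⟫ = 0 := by
    rw [real_inner_smul_left, inner_sub_right, inner_e_wp u e he p, inner_e_wp u e he q]
    ring
  rw [h1, norm_smul, he]
  simp [Real.norm_eq_abs, sq_abs]

lemma tp_base (u e : E) (he : ‖e‖ = 1) (τ : ℝ) : tp u e (u + τ • e) = τ := by
  simp [tp, real_inner_smul_left, real_inner_self_eq_norm_sq, he]

lemma wp_base (u e : E) (he : ‖e‖ = 1) (τ : ℝ) : wp u e (u + τ • e) = 0 := by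
  simp [wp, tp_base u e he τ]

/-- A point on the segment `[u, v]` lies in the convex hull of `V`. -/
lemma seg_mem_hull (V : Set E) (u v : E) (hu : u ∈ V) (hv : v ∈ V)
    (hD : 0 < ‖v - u‖) (τ : ℝ) (h0 : 0 ≤ τ) (h1 : τ ≤ ‖v - u‖) :
    u + τ • (‖v - u‖⁻¹ • (v - u)) ∈ convexHull ℝ V := by
  set D := ‖v - u‖ with hDdef
  have hkey : u + τ • (D⁻¹ • (v - u)) = (1 - τ/D) • u + (τ/D) • v := by
    rw [smul_smul, show τ * D⁻¹ = τ/D from (div_eq_mul_inv τ D).symm, smul_sub,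
      sub_smul, one_smul]
    abel
  rw [hkey]
  exact (convex_convexHull ℝ V) (subset_convexHull ℝ V hu) (subset_convexHull ℝ V hv)
    (by rw [sub_nonneg]; exact div_le_one_of_le₀ h1 hD.le) (by positivity) (by ring)

abbrev E2 := EuclideanSpace ℝ (Fin 2)

set_option maxHeartbeats 2000000 in
lemma key (V : Set E2) (hfin : V.Finite)
    (hdense : ∀ x ∈ convexHull ℝ V, ∃ p ∈ V, ‖x - p‖ ≤ 1 / (2 * Real.sqrt 2))
    (u v : V) (hD1 : 1 < ‖(v : E2) - (u : E2)‖) :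
    (geomGraph V).edist u v ≤ ((⌊2 * Real.sqrt 2 * ‖(v : E2) - (u : E2)‖⌋₊ : ℕ) : ℕ∞) := by
  classical
  set D : ℝ := ‖(v : E2) - (u : E2)‖ with hDdef
  set r : ℝ := 1 / (2 * Real.sqrt 2) with hrdef
  have hs2 : Real.sqrt 2 ^ 2 = 2 := Real.sq_sqrt (by norm_num)
  have hs0 : 0 < Real.sqrt 2 := Real.sqrt_pos.mpr (by norm_num)
  have hslb : 1.414 < Real.sqrt 2 := by nlinarith
  have hsub : Real.sqrt 2 < 1.4143 := by nlinarith
  have hr0 : 0 < r := by rw [hrdef]; positivity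
  have hr2 : r ^ 2 = 1 / 8 := by rw [hrdef, div_pow, mul_pow, hs2]; norm_num
  have hrlb : 0.3535 < r := by nlinarith
  have hrub : r < 0.3536 := by nlinarith
  have hD0 : 0 < D := by linarith
  set e : E2 := D⁻¹ • ((v : E2) - (u : E2)) with hedef
  have he : ‖e‖ = 1 := by
    rw [hedef, norm_smul, ← hDdef, norm_inv, Real.norm_eq_abs, abs_of_pos hD0,
      inv_mul_cancel₀ (ne_of_gt hD0)]
  have hveq : (v : E2) = (u : E2) + D • e := by
    rw [hedef, smul_smul, mul_inv_cancel₀ (ne_of_gt hD0), one_smul]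
    abel
  have htv : tp (u : E2) e (v : E2) = D := by
    have h := tp_base (u : E2) e he D
    rw [← hveq] at h; exact h
  have hwv : wp (u : E2) e (v : E2) = 0 := by
    have h := wp_base (u : E2) e he D
    rw [← hveq] at h; exact h
  have htu : tp (u : E2) e (u : E2) = 0 := by simp [tp]
  have hwu : wp (u : E2) e (u : E2) = 0 := by simp [wp, tp]
  -- density witnesses along the segment
  have hwit : ∀ τ : ℝ, 0 ≤ τ → τ ≤ D → ∃ q ∈ V,
      ‖q - ((u : E2) + τ • e)‖ ≤ r ∧ |tp (u : E2) e q - τ| ≤ r ∧ ‖wp (u : E2) e q‖ ≤ r := by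
    intro τ h0 h1
    obtain ⟨q, hqV, hqd⟩ := hdense ((u : E2) + τ • e)
      (seg_mem_hull V (u : E2) (v : E2) u.2 v.2 (by rw [← hDdef]; exact hD0) τ h0
        (by rw [← hDdef]; exact h1))
    have hn : ‖q - ((u : E2) + τ • e)‖ ≤ r := by
      rw [norm_sub_rev, hrdef]; exact hqd
    have hpy := pyth (u : E2) e he q ((u : E2) + τ • e)
    rw [tp_base (u : E2) e he τ, wp_base (u : E2) e he τ, sub_zero] at hpy
    have hsq : (tp (u : E2) e q - τ) ^ 2 + ‖wp (u : E2) e q‖ ^ 2 ≤ r ^ 2 := by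
      rw [← hpy]
      nlinarith [norm_nonneg (q - ((u : E2) + τ • e))]
    refine ⟨q, hqV, hn, ?_, ?_⟩
    · rw [abs_le]
      constructor <;> nlinarith [sq_nonneg (‖wp (u : E2) e q‖)]
    · nlinarith [norm_nonneg (wp (u : E2) e q), sq_nonneg (tp (u : E2) e q - τ)]
  -- one-hop helper
  have hop : ∀ a b : V, ‖(a : E2) - (b : E2)‖ ≤ 1 → (geomGraph V).edist a b ≤ 1 := by
    intro a b hab
    by_cases h : a = b
    · subst h; rw [SimpleGraph.edist_self]; exact zero_le_one
    · exact le_of_eq (SimpleGraph.edist_eq_one_iff_adj.mpr ⟨h, hab⟩)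
  -- adjacency from coordinates
  have hB : ∀ a b : E2, ‖wp (u : E2) e a‖ ≤ r → ‖wp (u : E2) e b‖ ≤ r →
      tp (u : E2) e a - tp (u : E2) e b ≤ 2 * r → tp (u : E2) e b - tp (u : E2) e a ≤ 2 * r →
      ‖a - b‖ ≤ 1 := by
    intro a b hwa hwb h1 h2
    have hpy := pyth (u : E2) e he a b
    have hW : ‖wp (u : E2) e a - wp (u : E2) e b‖ ≤ 2 * r :=
      le_trans (norm_sub_le _ _) (by linarith)
    have hΔ : (tp (u : E2) e a - tp (u : E2) e b) ^ 2 ≤ (2 * r) ^ 2 := by nlinarith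
    have hW2 : ‖wp (u : E2) e a - wp (u : E2) e b‖ ^ 2 ≤ (2 * r) ^ 2 := by
      nlinarith [norm_nonneg (wp (u : E2) e a - wp (u : E2) e b)]
    nlinarith [norm_nonneg (a - b)]
  -- main induction
  have main : ∀ k : ℕ, ∀ p : V, 1 ≤ k → ‖wp (u : E2) e (p : E2)‖ ≤ r →
      0 ≤ tp (u : E2) e (p : E2) → tp (u : E2) e (p : E2) ≤ D →
      D - tp (u : E2) e (p : E2) ≤ (k + 1) * r → (geomGraph V).edist p v ≤ (k : ℕ∞) := by
    intro k
    induction k using Nat.strong_induction_on with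
    | _ k IH =>
    intro p hk hwp htp0 htpD hgap
    by_cases hb1 : D - tp (u : E2) e (p : E2) ≤ 2 * r
    · -- one hop
      by_cases hpv : p = v
      · subst hpv; rw [SimpleGraph.edist_self]; exact zero_le
      · have hd : ‖(p : E2) - (v : E2)‖ ≤ 1 := by
          apply hB _ _ hwp (by rw [hwv]; simpa using hr0.le) ?_ ?_ <;> rw [htv]
          · linarith
          · linarith
        exact le_trans (hop p v hd) (by exact_mod_cast hk)
    · push_neg at hb1
      by_cases hb2 : D - tp (u : E2) e (p : E2) ≤ 3 * r
      · -- two hops via a witness near D - 3r/2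
        have hk2 : 2 ≤ k := by
          have h1 : (2 : ℝ) * r < ((k : ℝ) + 1) * r := lt_of_lt_of_le (by linarith) hgap
          have h2 : (1 : ℝ) < (k : ℝ) := by nlinarith
          have h3 : 1 < k := by exact_mod_cast h2
          omega
        obtain ⟨q, hqV, hqn, hqt, hqw⟩ := hwit (D - 3 * r / 2) (by nlinarith) (by nlinarith)
        have hpy := pyth (u : E2) e he (p : E2) ((u : E2) + (D - 3 * r / 2) • e)
        rw [tp_base (u : E2) e he _, wp_base (u : E2) e he _, sub_zero] at hpy
        have h1 : (tp (u : E2) e (p : E2) - (D - 3 * r / 2)) ^ 2 ≤ (3 * r / 2) ^ 2 := by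
          nlinarith
        have h8 : ‖(p : E2) - ((u : E2) + (D - 3 * r / 2) • e)‖ ^ 2 ≤ 13 / 32 := by
          rw [hpy]
          nlinarith [norm_nonneg (wp (u : E2) e (p : E2))]
        have hpx : ‖(p : E2) - ((u : E2) + (D - 3 * r / 2) • e)‖ ≤ 1 - r := by
          nlinarith [norm_nonneg ((p : E2) - ((u : E2) + (D - 3 * r / 2) • e))]
        have hpq : ‖(p : E2) - q‖ ≤ 1 := by
          have hsplit : (p : E2) - q = ((p : E2) - ((u : E2) + (D - 3 * r / 2) • e)) +
              (((u : E2) + (D - 3 * r / 2) • e) - q) := by abel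
          rw [hsplit]
          refine le_trans (norm_add_le _ _) ?_
          have h2 : ‖((u : E2) + (D - 3 * r / 2) • e) - q‖ ≤ r := by
            rw [norm_sub_rev]; exact hqn
          linarith
        have hqv : ‖q - (v : E2)‖ ≤ 1 := by
          have hxv : ((u : E2) + (D - 3 * r / 2) • e) - (v : E2) = (-(3 * r / 2)) • e := by
            rw [hveq]
            module
          have hsplit : q - (v : E2) = (q - ((u : E2) + (D - 3 * r / 2) • e)) +
              (((u : E2) + (D - 3 * r / 2) • e) - (v : E2)) := by abel
          rw [hsplit]
          refine le_trans (norm_add_le _ _) ?_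
          rw [hxv, norm_smul, he, Real.norm_eq_abs, abs_neg, abs_of_nonneg (by positivity : (0:ℝ) ≤ 3 * r / 2)]
          nlinarith
        refine le_trans (SimpleGraph.edist_triangle (v := (⟨q, hqV⟩ : V))) ?_
        have e1 := hop p ⟨q, hqV⟩ hpq
        have e2 := hop ⟨q, hqV⟩ v hqv
        have : (geomGraph V).edist p ⟨q, hqV⟩ + (geomGraph V).edist ⟨q, hqV⟩ v ≤ 1 + 1 :=
          add_le_add e1 e2
        refine le_trans this ?_
        have h11 : (1 + 1 : ℕ∞) = ((2 : ℕ) : ℕ∞) := by norm_cast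
        rw [h11]
        exact_mod_cast hk2
      · -- the pair step
        push_neg at hb2
        have hk3 : 3 ≤ k := by
          have h1 : (3 : ℝ) * r < ((k : ℝ) + 1) * r := lt_of_lt_of_le (by linarith) hgap
          have h2 : (2 : ℝ) < (k : ℝ) := by nlinarith
          have h3 : 2 < k := by exact_mod_cast h2
          omega
        obtain ⟨m, rfl⟩ : ∃ m, k = m + 3 := ⟨k - 3, by omega⟩
        have hA : {q : E2 | q ∈ V ∧ ‖wp (u : E2) e q‖ ≤ r ∧ tp (u : E2) e (p : E2) ≤ tp (u : E2) e q ∧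
            tp (u : E2) e q ≤ tp (u : E2) e (p : E2) + 2 * r}.Finite :=
          hfin.subset (fun q hq => hq.1)
        have hpA : (p : E2) ∈ hA.toFinset := by
          rw [Set.Finite.mem_toFinset]
          exact ⟨p.2, hwp, le_refl _, by linarith⟩
        obtain ⟨q₁, hq₁mem, hq₁max⟩ := Finset.exists_max_image hA.toFinset (tp (u : E2) e) ⟨_, hpA⟩
        rw [Set.Finite.mem_toFinset] at hq₁mem
        obtain ⟨hq₁V, hq₁w, hq₁lo, hq₁hi⟩ := hq₁mem
        have hq₁max' : ∀ b, b ∈ V → ‖wp (u : E2) e b‖ ≤ r → tp (u : E2) e (p : E2) ≤ tp (u : E2) e b →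
            tp (u : E2) e b ≤ tp (u : E2) e (p : E2) + 2 * r → tp (u : E2) e b ≤ tp (u : E2) e q₁ :=
          fun b h1 h2 h3 h4 => hq₁max b (by rw [Set.Finite.mem_toFinset]; exact ⟨h1, h2, h3, h4⟩)
        have hpq₁ : (geomGraph V).edist p ⟨q₁, hq₁V⟩ ≤ 1 :=
          hop _ _ (hB _ _ hwp hq₁w (by linarith) (by linarith))
        by_cases hcase : D ≤ tp (u : E2) e q₁ + 2 * r
        · -- two hops suffice
          have hq₁v : ‖q₁ - (v : E2)‖ ≤ 1 := by
            apply hB _ _ hq₁w (by rw [hwv]; simpa using hr0.le) ?_ ?_ <;> rw [htv]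
            · linarith
            · linarith
          refine le_trans (SimpleGraph.edist_triangle (v := (⟨q₁, hq₁V⟩ : V))) ?_
          have e2 := hop ⟨q₁, hq₁V⟩ v hq₁v
          refine le_trans (add_le_add hpq₁ e2) ?_
          have h11 : (1 + 1 : ℕ∞) = ((2 : ℕ) : ℕ∞) := by norm_cast
          rw [h11]
          exact_mod_cast by omega
        · push_neg at hcase
          have hZ : {q : E2 | q ∈ V ∧ ‖wp (u : E2) e q‖ ≤ r ∧
              tp (u : E2) e (p : E2) + 2 * r < tp (u : E2) e q}.Finite :=
            hfin.subset (fun q hq => hq.1)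
          have hvZ : (v : E2) ∈ hZ.toFinset := by
            rw [Set.Finite.mem_toFinset]
            refine ⟨v.2, by rw [hwv]; simpa using hr0.le, by rw [htv]; linarith⟩
          obtain ⟨z, hzmem, hzmin⟩ := Finset.exists_min_image hZ.toFinset (tp (u : E2) e) ⟨_, hvZ⟩
          rw [Set.Finite.mem_toFinset] at hzmem
          obtain ⟨hzV, hzw, hzlo⟩ := hzmem
          have hzmin' : ∀ b, b ∈ V → ‖wp (u : E2) e b‖ ≤ r →
              tp (u : E2) e (p : E2) + 2 * r < tp (u : E2) e b → tp (u : E2) e z ≤ tp (u : E2) e b :=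
            fun b h1 h2 h3 => hzmin b (by rw [Set.Finite.mem_toFinset]; exact ⟨h1, h2, h3⟩)
          have hz2 : tp (u : E2) e z ≤ tp (u : E2) e q₁ + 2 * r := by
            by_contra hcon
            push_neg at hcon
            have hmin : tp (u : E2) e q₁ + 2 * r < min (tp (u : E2) e z) D := lt_min hcon hcase
            set δ : ℝ := (min (tp (u : E2) e z) D - (tp (u : E2) e q₁ + 2 * r)) / 2 with hδdef
            have hδ0 : 0 < δ := by rw [hδdef]; linarith
            have hδD : tp (u : E2) e q₁ + r + δ ≤ D := by
              have h2 : δ ≤ (D - (tp (u : E2) e q₁ + 2 * r)) / 2 := by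
                rw [hδdef]
                have := min_le_right (tp (u : E2) e z) D
                linarith
              linarith
            obtain ⟨q', hq'V, hq'n, hq't, hq'w⟩ := hwit (tp (u : E2) e q₁ + r + δ)
              (by linarith) hδD
            have habs := abs_le.mp hq't
            have hq'lo : tp (u : E2) e q₁ + δ ≤ tp (u : E2) e q' := by linarith [habs.1]
            have hq'hi : tp (u : E2) e q' ≤ tp (u : E2) e q₁ + 2 * r + δ := by linarith [habs.2]
            by_cases hsmall : tp (u : E2) e q' ≤ tp (u : E2) e (p : E2) + 2 * r
            · have := hq₁max' q' hq'V hq'w (by linarith) hsmall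
              linarith
            · push_neg at hsmall
              have h1 := hzmin' q' hq'V hq'w hsmall
              have h2 : δ ≤ (tp (u : E2) e z - (tp (u : E2) e q₁ + 2 * r)) / 2 := by
                rw [hδdef]
                have := min_le_left (tp (u : E2) e z) D
                linarith
              linarith
          have hzq₁ : (geomGraph V).edist ⟨q₁, hq₁V⟩ ⟨z, hzV⟩ ≤ 1 :=
            hop _ _ (hB _ _ hq₁w hzw (by linarith) (by linarith))
          have hIH : (geomGraph V).edist ⟨z, hzV⟩ v ≤ ((m + 1 : ℕ) : ℕ∞) := by
            apply IH (m + 1) (by omega) ⟨z, hzV⟩ (by omega) hzw (by linarith)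
              (by linarith) ?_
            have hgap' : D - tp (u : E2) e (p : E2) ≤ ((m : ℝ) + 3 + 1) * r := by
              push_cast at hgap
              linarith
            push_cast
            linarith
          refine le_trans (SimpleGraph.edist_triangle (v := (⟨q₁, hq₁V⟩ : V))) ?_
          refine le_trans (add_le_add le_rfl (SimpleGraph.edist_triangle (v := (⟨z, hzV⟩ : V)))) ?_
          refine le_trans (add_le_add hpq₁ (add_le_add hzq₁ hIH)) ?_
          have : (1 : ℕ∞) + (1 + ((m + 1 : ℕ) : ℕ∞)) = ((m + 3 : ℕ) : ℕ∞) := by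
            push_cast
            ring
          rw [this]
  -- conclude
  have h2sr : 2 * Real.sqrt 2 * r = 1 := by
    rw [hrdef]
    field_simp
  have hN1 : 1 ≤ ⌊2 * Real.sqrt 2 * D⌋₊ := by
    apply Nat.le_floor
    push_cast
    nlinarith
  have hfloor : 2 * Real.sqrt 2 * D < (⌊2 * Real.sqrt 2 * D⌋₊ : ℝ) + 1 :=
    Nat.lt_floor_add_one _
  have hgap0 : D - tp (u : E2) e (u : E2) ≤ ((⌊2 * Real.sqrt 2 * D⌋₊ : ℕ) + 1) * r := by
    rw [htu, sub_zero]
    have hDr : 2 * Real.sqrt 2 * D * r = D := by nlinarith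
    nlinarith [mul_lt_mul_of_pos_right hfloor hr0]
  exact main _ u hN1 (by rw [hwu]; simpa using hr0.le) (le_of_eq htu.symm)
    (by rw [htu]; exact hD0.le) hgap0

end

end Stmt17Aux

theorem stmt17 (V : Set (EuclideanSpace ℝ (Fin 2))) (hfin : V.Finite)
    (hdense : ∀ x ∈ convexHull ℝ V, ∃ p ∈ V, ‖x - p‖ ≤ 1 / (2 * Real.sqrt 2)) :
    ∀ u v : V, 1 < ‖(u : EuclideanSpace ℝ (Fin 2)) - (v : EuclideanSpace ℝ (Fin 2))‖ →
      (geomGraph V).edist u v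
        ≤ ((⌊2 * Real.sqrt 2 *
            ‖(u : EuclideanSpace ℝ (Fin 2)) - (v : EuclideanSpace ℝ (Fin 2))‖⌋₊ : ℕ) : ℕ∞) := by
  intro u v huv
  have h := Stmt17Aux.key V hfin hdense u v (by rw [norm_sub_rev]; exact huv)
  rw [show ‖(u : EuclideanSpace ℝ (Fin 2)) - (v : EuclideanSpace ℝ (Fin 2))‖ =
      ‖(v : EuclideanSpace ℝ (Fin 2)) - (u : EuclideanSpace ℝ (Fin 2))‖ from norm_sub_rev _ _]
  exact h
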